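/- Let K : X → Y be a compact linear operator with singular system {(σ_n, v_n, u_n)}_{n∈ℕ}, where (u_n) spans the closure of the range of K and (v_n) spans the closure of the range of K*. The equation K x = y has a solution x ∈ X if and only if y is orthogonal to the kernel of K* and ∑_n σ_n^{−2} |⟨y, u_n⟩|² < ∞; in this case the element x = ∑_n (⟨y, u_n⟩ / σ_n) v_n (the series converging in X) satisfies K x = y. -/

import Mathlib

open scoped InnerProductSpace

section Aux
variable {X Y : Type*}
    [NormedAddCommGroup X] [InnerProductSpace ℝ X] [CompleteSpace X]
    [NormedAddCommGroup Y] [InnerProductSpace ℝ Y] [CompleteSpace Y]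

lemma picard_ker_eq (K : X →L[ℝ] Y) :
    (LinearMap.ker (ContinuousLinearMap.adjoint K : Y →ₗ[ℝ] X) : Submodule ℝ Y)
      = (LinearMap.range (K : X →ₗ[ℝ] Y))ᗮ := by
  ext z
  simp only [LinearMap.mem_ker, Submodule.mem_orthogonal]
  constructor
  · rintro hz w ⟨x, rfl⟩
    have h := ContinuousLinearMap.adjoint_inner_left K x z
    rw [show (ContinuousLinearMap.adjoint K) z = 0 from hz] at h
    simp only [inner_zero_left] at h
    rw [real_inner_comm]
    exact h.symm
  · intro h
    have h1 : ∀ x : X, ⟪(ContinuousLinearMap.adjoint K) z, x⟫_ℝ = 0 := by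
      intro x
      rw [ContinuousLinearMap.adjoint_inner_left, real_inner_comm]
      exact h (K x) ⟨x, rfl⟩
    have h2 := h1 ((ContinuousLinearMap.adjoint K) z)
    rwa [inner_self_eq_zero] at h2

end Aux

/-- Picard criterion: `K x = y` is solvable iff `y ⊥ ker K*` and
`∑ σ_n^{-2} |⟨y, u_n⟩|² < ∞`; in this case `x = ∑ (⟨y, u_n⟩/σ_n) v_n` solves `K x = y`. -/
theorem picard_criterion {X Y : Type*}
    [NormedAddCommGroup X] [InnerProductSpace ℝ X] [CompleteSpace X]
    [NormedAddCommGroup Y] [InnerProductSpace ℝ Y] [CompleteSpace Y]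
    (K : X →L[ℝ] Y) (hK : IsCompactOperator K)
    (σ : ℕ → ℝ) (v : ℕ → X) (u : ℕ → Y)
    (hσ : ∀ n, 0 < σ n) (hv : Orthonormal ℝ v) (hu : Orthonormal ℝ u)
    (hKv : ∀ n, K (v n) = σ n • u n)
    (hKadj : ∀ n, (ContinuousLinearMap.adjoint K) (u n) = σ n • v n)
    (huspan : (Submodule.span ℝ (Set.range u)).topologicalClosure
      = (LinearMap.range (K : X →ₗ[ℝ] Y)).topologicalClosure)
    (hvspan : (Submodule.span ℝ (Set.range v)).topologicalClosure
      = (LinearMap.range (ContinuousLinearMap.adjoint K : Y →ₗ[ℝ] X)).topologicalClosure)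
    (y : Y) :
    ((∃ x : X, K x = y) ↔
      (y ∈ (LinearMap.ker (ContinuousLinearMap.adjoint K : Y →ₗ[ℝ] X))ᗮ ∧
        Summable fun n => (σ n ^ 2)⁻¹ * |⟪y, u n⟫_ℝ| ^ 2)) ∧
    ((y ∈ (LinearMap.ker (ContinuousLinearMap.adjoint K : Y →ₗ[ℝ] X))ᗮ ∧
        Summable fun n => (σ n ^ 2)⁻¹ * |⟪y, u n⟫_ℝ| ^ 2) →
      ∃ x : X, HasSum (fun n => (⟪y, u n⟫_ℝ / σ n) • v n) x ∧ K x = y) := by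
  have hσ' : ∀ n, σ n ≠ 0 := fun n => (hσ n).ne'
  -- the main construction
  have main : (y ∈ (LinearMap.ker (ContinuousLinearMap.adjoint K : Y →ₗ[ℝ] X))ᗮ ∧
        Summable fun n => (σ n ^ 2)⁻¹ * |⟪y, u n⟫_ℝ| ^ 2) →
      ∃ x : X, HasSum (fun n => (⟪y, u n⟫_ℝ / σ n) • v n) x ∧ K x = y := by
    rintro ⟨hy, hsum⟩
    set c : ℕ → ℝ := fun n => ⟪y, u n⟫_ℝ with hc
    -- summability of the coefficient squares
    have hsq : Summable fun n => ‖c n / σ n‖ ^ 2 := by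
      refine hsum.congr fun n => ?_
      rw [norm_div, Real.norm_eq_abs, Real.norm_eq_abs, div_pow, sq_abs (σ n), sq_abs,
        div_eq_inv_mul]
    -- convergence of the series defining x
    obtain ⟨x, hx⟩ : ∃ x : X, HasSum (fun n => (c n / σ n) • v n) x := by
      have h := (hv.orthogonalFamily.summable_iff_norm_sq_summable
        (fun n => c n / σ n)).2 hsq
      simp only [LinearIsometry.toSpanSingleton_apply] at h
      exact ⟨_, h.hasSum⟩
    refine ⟨x, hx, ?_⟩
    -- K x is the sum of c n • u n
    have hKx : HasSum (fun n => c n • u n) (K x) := by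
      have h1 := hx.mapL K
      have heq : (fun n => K ((c n / σ n) • v n)) = fun n => c n • u n := by
        funext n
        rw [ContinuousLinearMap.map_smul, hKv n, smul_smul,
          div_mul_cancel₀ _ (hσ' n)]
      rwa [heq] at h1
    -- y lies in the closure of the span of the u n
    have hyc : y ∈ (Submodule.span ℝ (Set.range u)).topologicalClosure := by
      rw [huspan, ← Submodule.orthogonal_orthogonal_eq_closure, ← picard_ker_eq K]
      exact hy
    -- K x lies there too
    have hKxc : K x ∈ (Submodule.span ℝ (Set.range u)).topologicalClosure := by
      rw [huspan]
      exact (LinearMap.range (K : X →ₗ[ℝ] Y)).le_topologicalClosure ⟨x, rfl⟩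
    -- y - K x is orthogonal to each u n
    have hinner : ∀ n, ⟪u n, K x⟫_ℝ = c n := by
      intro n
      have h2 := hKx.mapL (innerSL ℝ (u n))
      have heq : (fun i => (innerSL ℝ (u n)) (c i • u i))
          = fun i => if i = n then c n else 0 := by
        funext i
        simp only [innerSL_apply_apply, inner_smul_right]
        rcases eq_or_ne i n with rfl | h
        · simp [hu.1 i, real_inner_self_eq_norm_sq]
        · simp [h, hu.2 (Ne.symm h)]
      rw [heq] at h2
      exact (h2.unique (hasSum_ite_eq n (c n))).symm ▸ rfl
    -- deduce y = K x
    have hdo : y - K x ∈ (Submodule.span ℝ (Set.range u))ᗮ := by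
      rw [Submodule.mem_orthogonal]
      intro w hw
      induction hw using Submodule.span_induction with
      | mem w hw =>
        obtain ⟨n, rfl⟩ := hw
        rw [inner_sub_right, hinner n]
        show ⟪u n, y⟫_ℝ - ⟪y, u n⟫_ℝ = 0
        rw [real_inner_comm, sub_self]
      | zero => simp
      | add w₁ w₂ _ _ h1 h2 => rw [inner_add_left, h1, h2, add_zero]
      | smul a w _ h1 => rw [inner_smul_left, h1, mul_zero]
    have hdc : y - K x ∈ (Submodule.span ℝ (Set.range u))ᗮᗮ := by
      rw [Submodule.orthogonal_orthogonal_eq_closure]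
      exact Submodule.sub_mem _ hyc hKxc
    have : ⟪y - K x, y - K x⟫_ℝ = 0 :=
      (Submodule.mem_orthogonal _ _).1 hdc _ hdo
    rw [inner_self_eq_zero, sub_eq_zero] at this
    exact this.symm
  refine ⟨⟨?_, fun h => (main h).imp fun x hx => hx.2⟩, main⟩
  rintro ⟨x, rfl⟩
  constructor
  · rw [Submodule.mem_orthogonal]
    intro w hw
    rw [LinearMap.mem_ker] at hw
    have h := ContinuousLinearMap.adjoint_inner_left K x w
    rw [show (ContinuousLinearMap.adjoint K) w = 0 from hw] at h
    simp only [inner_zero_left] at h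
    exact h.symm
  · have hb : Summable fun n => ‖⟪v n, x⟫_ℝ‖ ^ 2 := hv.inner_products_summable x
    refine hb.congr fun n => ?_
    have h1 : ⟪K x, u n⟫_ℝ = σ n * ⟪v n, x⟫_ℝ := by
      rw [real_inner_comm, ← ContinuousLinearMap.adjoint_inner_left, hKadj n,
        inner_smul_left, starRingEnd_apply, star_trivial]
    rw [h1, abs_mul, mul_pow, sq_abs (σ n), ← mul_assoc,
      inv_mul_cancel₀ (pow_ne_zero 2 (hσ' n)), one_mul, Real.norm_eq_abs]
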